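/- In the 1-D counterexample, with u_{1,ε} = 1_{[ε,∞)}, u_{3,ε} = 1_{[−ε,ε]}, and kernel K_{1,3}(h) = δ₁·(1_{[−11,−9]}(h) + 1_{[9,11]}(h)) + δ₂·1_{[−1,1]}(h), the rescaled interaction energy satisfies (1/ε)·∫_ℝ ∫_ℝ 1_{[ε,∞)}(x)·K_{1,3}(h)·1_{[−ε,ε]}(x − εh) dh dx = 4δ₁ + δ₂/2 for every ε > 0. -/

import Mathlib

open Real Set MeasureTheory


lemma aux_ind_int (a b : ℝ) : Integrable ((Icc a b).indicator (fun _ => (1:ℝ))) := by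
  rw [integrable_indicator_iff measurableSet_Icc]
  exact integrableOn_const (by rw [Real.volume_Icc]; exact ENNReal.ofReal_ne_top)

lemma aux_prod_eq (a b c d : ℝ) (h : ℝ) :
    (Icc a b).indicator (fun _ => (1:ℝ)) h * (Icc c d).indicator (fun _ => (1:ℝ)) h
      = (Icc (max a c) (min b d)).indicator (fun _ => (1:ℝ)) h := by
  rw [← inter_indicator_mul, Icc_inter_Icc]
  simp [Set.indicator_apply]

lemma aux_prod_int (a b c d : ℝ) :
    ∫ h : ℝ, (Icc a b).indicator (fun _ => (1:ℝ)) h * (Icc c d).indicator (fun _ => (1:ℝ)) h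
      = max (min b d - max a c) 0 := by
  simp only [aux_prod_eq]
  rw [show ((Icc (max a c) (min b d)).indicator (fun _ => (1:ℝ))) = (Icc (max a c) (min b d)).indicator 1 from rfl,
    integral_indicator_one measurableSet_Icc, Real.volume_real_Icc]

lemma aux_prod_integrable (C a b c d : ℝ) :
    Integrable (fun h : ℝ => C * ((Icc a b).indicator (fun _ => (1:ℝ)) h * (Icc c d).indicator (fun _ => (1:ℝ)) h)) := by
  simp only [aux_prod_eq]
  exact (aux_ind_int _ _).const_mul C

lemma aux3 (f g h : ℝ → ℝ) (hf : Integrable f) (hg : Integrable g) (hh : Integrable h) :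
    ∫ x : ℝ, (f x + (g x + h x)) = (∫ x, f x) + ((∫ x, g x) + ∫ x, h x) := by
  rw [integral_add hf ((hg.add hh : Integrable (fun x => g x + h x)) ), integral_add hg hh]

lemma inner_eq (δ1 δ2 t : ℝ) :
    (∫ h : ℝ, (Ici (1:ℝ)).indicator (fun _ => (1:ℝ)) t *
        (δ1 * ((Icc (-11:ℝ) (-9)).indicator (fun _ => (1:ℝ)) h +
               (Icc (9:ℝ) 11).indicator (fun _ => (1:ℝ)) h) +
         δ2 * (Icc (-1:ℝ) 1).indicator (fun _ => (1:ℝ)) h) *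
        (Icc (-1:ℝ) 1).indicator (fun _ => (1:ℝ)) (t - h))
    = (Ici (1:ℝ)).indicator (fun _ => (1:ℝ)) t *
        (δ1 * (max (min (-9:ℝ) (t+1) - max (-11:ℝ) (t-1)) 0 +
               max (min (11:ℝ) (t+1) - max (9:ℝ) (t-1)) 0) +
         δ2 * max (min (1:ℝ) (t+1) - max (-1:ℝ) (t-1)) 0) := by
  have e1 : ∀ h : ℝ, (Icc (-1:ℝ) 1).indicator (fun _ => (1:ℝ)) (t - h)
      = (Icc (t-1) (t+1)).indicator (fun _ => (1:ℝ)) h := by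
    intro h
    simp only [Set.indicator_apply, mem_Icc]
    congr 1
    simp only [eq_iff_iff]
    constructor <;> rintro ⟨u, v⟩ <;> constructor <;> linarith
  have hfun : (fun h : ℝ => (Ici (1:ℝ)).indicator (fun _ => (1:ℝ)) t *
        (δ1 * ((Icc (-11:ℝ) (-9)).indicator (fun _ => (1:ℝ)) h +
               (Icc (9:ℝ) 11).indicator (fun _ => (1:ℝ)) h) +
         δ2 * (Icc (-1:ℝ) 1).indicator (fun _ => (1:ℝ)) h) *
        (Icc (-1:ℝ) 1).indicator (fun _ => (1:ℝ)) (t - h))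
      = fun h : ℝ =>
        ((Ici (1:ℝ)).indicator (fun _ => (1:ℝ)) t * δ1) *
          ((Icc (-11:ℝ) (-9)).indicator (fun _ => (1:ℝ)) h * (Icc (t-1) (t+1)).indicator (fun _ => (1:ℝ)) h) +
        (((Ici (1:ℝ)).indicator (fun _ => (1:ℝ)) t * δ1) *
          ((Icc (9:ℝ) 11).indicator (fun _ => (1:ℝ)) h * (Icc (t-1) (t+1)).indicator (fun _ => (1:ℝ)) h) +
         ((Ici (1:ℝ)).indicator (fun _ => (1:ℝ)) t * δ2) *
          ((Icc (-1:ℝ) 1).indicator (fun _ => (1:ℝ)) h * (Icc (t-1) (t+1)).indicator (fun _ => (1:ℝ)) h)) := by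
    funext h
    rw [e1 h]
    ring
  rw [hfun, aux3 _ _ _ (aux_prod_integrable _ _ _ _ _) (aux_prod_integrable _ _ _ _ _)
      (aux_prod_integrable _ _ _ _ _),
    integral_const_mul, integral_const_mul, integral_const_mul,
    aux_prod_int, aux_prod_int, aux_prod_int]
  ring


noncomputable def Gfun (δ1 δ2 : ℝ) : ℝ → ℝ := fun t =>
  (Ici (1:ℝ)).indicator (fun _ => (1:ℝ)) t *
    (δ1 * (max (min (-9:ℝ) (t+1) - max (-11:ℝ) (t-1)) 0 +
           max (min (11:ℝ) (t+1) - max (9:ℝ) (t-1)) 0) +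
     δ2 * max (min (1:ℝ) (t+1) - max (-1:ℝ) (t-1)) 0)

lemma Gfun_zero (δ1 δ2 : ℝ) : ∀ t ∉ Icc (1:ℝ) 12, Gfun δ1 δ2 t = 0 := by
  intro t ht
  rw [mem_Icc, not_and_or, not_le, not_le] at ht
  rcases ht with ht | ht
  · have : t ∉ Ici (1:ℝ) := by simp [mem_Ici]; linarith
    simp [Gfun, indicator_of_notMem this]
  · have m1 : max (min (-9:ℝ) (t+1) - max (-11:ℝ) (t-1)) 0 = 0 := max_eq_right (by
      have := min_le_left (-9:ℝ) (t+1); have := le_max_right (-11:ℝ) (t-1); linarith)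
    have m2 : max (min (11:ℝ) (t+1) - max (9:ℝ) (t-1)) 0 = 0 := max_eq_right (by
      have := min_le_left (11:ℝ) (t+1); have := le_max_right (9:ℝ) (t-1); linarith)
    have m3 : max (min (1:ℝ) (t+1) - max (-1:ℝ) (t-1)) 0 = 0 := max_eq_right (by
      have := min_le_left (1:ℝ) (t+1); have := le_max_right (-1:ℝ) (t-1); linarith)
    simp [Gfun, m1, m2, m3]

lemma Gfun_integrable (δ1 δ2 : ℝ) : Integrable (Gfun δ1 δ2) := by
  have hcont : Continuous (fun t : ℝ =>
      δ1 * (max (min (-9:ℝ) (t+1) - max (-11:ℝ) (t-1)) 0 +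
            max (min (11:ℝ) (t+1) - max (9:ℝ) (t-1)) 0) +
      δ2 * max (min (1:ℝ) (t+1) - max (-1:ℝ) (t-1)) 0) := by fun_prop
  have hon : IntegrableOn (Gfun δ1 δ2) (Icc (1:ℝ) 12) := by
    apply (hcont.integrableOn_Icc).congr_fun ?_ measurableSet_Icc
    intro t ht
    have h1 : t ∈ Ici (1:ℝ) := mem_Ici.2 ht.1
    simp [Gfun, indicator_of_mem h1]
  have hGind : Gfun δ1 δ2 = (Icc (1:ℝ) 12).indicator (Gfun δ1 δ2) := by
    funext t
    by_cases ht : t ∈ Icc (1:ℝ) 12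
    · rw [indicator_of_mem ht]
    · rw [indicator_of_notMem ht, Gfun_zero δ1 δ2 t ht]
  rw [hGind]
  exact (integrable_indicator_iff measurableSet_Icc).2 hon

lemma aux_affine (a b c d : ℝ) : ∫ t in a..b, (c + d*t) = c*(b-a) + d*(b^2-a^2)/2 := by
  rw [intervalIntegral.integral_add intervalIntegrable_const
      (((by fun_prop : Continuous (fun t : ℝ => d * t))).intervalIntegrable a b)]
  rw [intervalIntegral.integral_const_mul, integral_id, intervalIntegral.integral_const]
  simp only [smul_eq_mul]
  ring

lemma outer_eq (δ1 δ2 : ℝ) : ∫ t : ℝ, Gfun δ1 δ2 t = 4*δ1 + δ2/2 := by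
  have hInt := Gfun_integrable δ1 δ2
  have hGind : Gfun δ1 δ2 = (Icc (1:ℝ) 12).indicator (Gfun δ1 δ2) := by
    funext t
    by_cases ht : t ∈ Icc (1:ℝ) 12
    · rw [indicator_of_mem ht]
    · rw [indicator_of_notMem ht, Gfun_zero δ1 δ2 t ht]
  have iI : ∀ a b : ℝ, IntervalIntegrable (Gfun δ1 δ2) volume a b :=
    fun a b => hInt.intervalIntegrable
  calc ∫ t : ℝ, Gfun δ1 δ2 t = ∫ t : ℝ, (Icc (1:ℝ) 12).indicator (Gfun δ1 δ2) t := by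
        rw [← hGind]
    _ = ∫ t in Icc (1:ℝ) 12, Gfun δ1 δ2 t := integral_indicator measurableSet_Icc
    _ = ∫ t in Ioc (1:ℝ) 12, Gfun δ1 δ2 t := integral_Icc_eq_integral_Ioc
    _ = ∫ t in (1:ℝ)..12, Gfun δ1 δ2 t :=
        (intervalIntegral.integral_of_le (by norm_num : (1:ℝ) ≤ 12)).symm
    _ = (∫ t in (1:ℝ)..2, Gfun δ1 δ2 t) + ∫ t in (2:ℝ)..12, Gfun δ1 δ2 t :=
        (intervalIntegral.integral_add_adjacent_intervals (iI 1 2) (iI 2 12)).symm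
    _ = 4*δ1 + δ2/2 := by
        rw [← intervalIntegral.integral_add_adjacent_intervals (iI 2 8) (iI 8 12),
            ← intervalIntegral.integral_add_adjacent_intervals (iI 8 10) (iI 10 12)]
        have p1 : ∫ t in (1:ℝ)..2, Gfun δ1 δ2 t = δ2/2 := by
          rw [intervalIntegral.integral_congr (g := fun t : ℝ => (2*δ2) + (-δ2)*t) ?_]
          · rw [aux_affine]; ring
          · intro t ht
            rw [uIcc_of_le (by norm_num : (1:ℝ) ≤ 2), mem_Icc] at ht
            obtain ⟨ha, hb⟩ := ht
            have m1 : max (min (-9:ℝ) (t+1) - max (-11:ℝ) (t-1)) 0 = 0 := max_eq_right (by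
              have := min_le_left (-9:ℝ) (t+1); have := le_max_right (-11:ℝ) (t-1); linarith)
            have m2 : max (min (11:ℝ) (t+1) - max (9:ℝ) (t-1)) 0 = 0 := max_eq_right (by
              have := min_le_right (11:ℝ) (t+1); have := le_max_left (9:ℝ) (t-1); linarith)
            have m3 : max (min (1:ℝ) (t+1) - max (-1:ℝ) (t-1)) 0 = 2 - t := by
              rw [min_eq_left (by linarith), max_eq_right (by linarith : (-1:ℝ) ≤ t-1),
                max_eq_left (by linarith)]
              ring
            simp only [Gfun, indicator_of_mem (mem_Ici.2 ha), m1, m2, m3]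
            ring
        have p2 : ∫ t in (2:ℝ)..8, Gfun δ1 δ2 t = 0 := by
          rw [intervalIntegral.integral_congr (g := fun _ : ℝ => (0:ℝ)) ?_]
          · simp
          · intro t ht
            rw [uIcc_of_le (by norm_num : (2:ℝ) ≤ 8), mem_Icc] at ht
            obtain ⟨ha, hb⟩ := ht
            have m1 : max (min (-9:ℝ) (t+1) - max (-11:ℝ) (t-1)) 0 = 0 := max_eq_right (by
              have := min_le_left (-9:ℝ) (t+1); have := le_max_right (-11:ℝ) (t-1); linarith)
            have m2 : max (min (11:ℝ) (t+1) - max (9:ℝ) (t-1)) 0 = 0 := max_eq_right (by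
              have := min_le_right (11:ℝ) (t+1); have := le_max_left (9:ℝ) (t-1); linarith)
            have m3 : max (min (1:ℝ) (t+1) - max (-1:ℝ) (t-1)) 0 = 0 := max_eq_right (by
              have := min_le_left (1:ℝ) (t+1); have := le_max_right (-1:ℝ) (t-1); linarith)
            simp [Gfun, m1, m2, m3]
        have p3 : ∫ t in (8:ℝ)..10, Gfun δ1 δ2 t = 2*δ1 := by
          rw [intervalIntegral.integral_congr (g := fun t : ℝ => (-8*δ1) + δ1*t) ?_]
          · rw [aux_affine]; ring
          · intro t ht
            rw [uIcc_of_le (by norm_num : (8:ℝ) ≤ 10), mem_Icc] at ht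
            obtain ⟨ha, hb⟩ := ht
            have m1 : max (min (-9:ℝ) (t+1) - max (-11:ℝ) (t-1)) 0 = 0 := max_eq_right (by
              have := min_le_left (-9:ℝ) (t+1); have := le_max_right (-11:ℝ) (t-1); linarith)
            have m2 : max (min (11:ℝ) (t+1) - max (9:ℝ) (t-1)) 0 = t - 8 := by
              rw [min_eq_right (by linarith), max_eq_left (by linarith : t-1 ≤ (9:ℝ)),
                max_eq_left (by linarith)]
              ring
            have m3 : max (min (1:ℝ) (t+1) - max (-1:ℝ) (t-1)) 0 = 0 := max_eq_right (by
              have := min_le_left (1:ℝ) (t+1); have := le_max_right (-1:ℝ) (t-1); linarith)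
            simp only [Gfun, indicator_of_mem (mem_Ici.2 (by linarith : (1:ℝ) ≤ t)), m1, m2, m3]
            ring
        have p4 : ∫ t in (10:ℝ)..12, Gfun δ1 δ2 t = 2*δ1 := by
          rw [intervalIntegral.integral_congr (g := fun t : ℝ => (12*δ1) + (-δ1)*t) ?_]
          · rw [aux_affine]; ring
          · intro t ht
            rw [uIcc_of_le (by norm_num : (10:ℝ) ≤ 12), mem_Icc] at ht
            obtain ⟨ha, hb⟩ := ht
            have m1 : max (min (-9:ℝ) (t+1) - max (-11:ℝ) (t-1)) 0 = 0 := max_eq_right (by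
              have := min_le_left (-9:ℝ) (t+1); have := le_max_right (-11:ℝ) (t-1); linarith)
            have m2 : max (min (11:ℝ) (t+1) - max (9:ℝ) (t-1)) 0 = 12 - t := by
              rw [min_eq_left (by linarith), max_eq_right (by linarith : (9:ℝ) ≤ t-1),
                max_eq_left (by linarith)]
              ring
            have m3 : max (min (1:ℝ) (t+1) - max (-1:ℝ) (t-1)) 0 = 0 := max_eq_right (by
              have := min_le_left (1:ℝ) (t+1); have := le_max_right (-1:ℝ) (t-1); linarith)
            simp only [Gfun, indicator_of_mem (mem_Ici.2 (by linarith : (1:ℝ) ≤ t)), m1, m2, m3]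
            ring
        rw [p1, p2, p3, p4]
        ring

lemma inner_eq' (δ1 δ2 t : ℝ) :
    (∫ h : ℝ, (Ici (1:ℝ)).indicator (fun _ => (1:ℝ)) t *
        (δ1 * ((Icc (-11:ℝ) (-9)).indicator (fun _ => (1:ℝ)) h +
               (Icc (9:ℝ) 11).indicator (fun _ => (1:ℝ)) h) +
         δ2 * (Icc (-1:ℝ) 1).indicator (fun _ => (1:ℝ)) h) *
        (Icc (-1:ℝ) 1).indicator (fun _ => (1:ℝ)) (t - h))
    = Gfun δ1 δ2 t := inner_eq δ1 δ2 t

/-- the rescaled (1,3)-interaction energy in the 1-D counterexample equals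
    4δ₁ + δ₂/2 for every ε > 0. -/
theorem stmt_13 (δ1 δ2 : ℝ) (h1 : 0 < δ1) (h2 : 0 < δ2) (ε : ℝ) (hε : 0 < ε) :
    (1 / ε) * ∫ x : ℝ, ∫ h : ℝ,
        (Ici ε).indicator (fun _ => (1 : ℝ)) x *
        (δ1 * ((Icc (-11 : ℝ) (-9)).indicator (fun _ => (1 : ℝ)) h +
               (Icc (9 : ℝ) 11).indicator (fun _ => (1 : ℝ)) h) +
         δ2 * (Icc (-1 : ℝ) 1).indicator (fun _ => (1 : ℝ)) h) *
        (Icc (-ε) ε).indicator (fun _ => (1 : ℝ)) (x - ε * h)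
      = 4 * δ1 + δ2 / 2 := by
  have indA : ∀ x : ℝ, (Ici ε).indicator (fun _ => (1:ℝ)) (ε * x)
      = (Ici (1:ℝ)).indicator (fun _ => (1:ℝ)) x := by
    intro x
    simp only [Set.indicator_apply, mem_Ici]
    congr 1
    simp only [eq_iff_iff]
    constructor
    · intro hx; nlinarith
    · intro hx; nlinarith
  have indB : ∀ c : ℝ, (Icc (-ε) ε).indicator (fun _ => (1:ℝ)) (ε * c)
      = (Icc (-1:ℝ) 1).indicator (fun _ => (1:ℝ)) c := by
    intro c
    simp only [Set.indicator_apply, mem_Icc]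
    congr 1
    simp only [eq_iff_iff]
    constructor <;> rintro ⟨u, v⟩ <;> constructor <;> nlinarith
  have key : ∀ x : ℝ,
      (∫ h : ℝ, (Ici ε).indicator (fun _ => (1:ℝ)) (ε * x) *
        (δ1 * ((Icc (-11:ℝ) (-9)).indicator (fun _ => (1:ℝ)) h +
               (Icc (9:ℝ) 11).indicator (fun _ => (1:ℝ)) h) +
         δ2 * (Icc (-1:ℝ) 1).indicator (fun _ => (1:ℝ)) h) *
        (Icc (-ε) ε).indicator (fun _ => (1:ℝ)) (ε * x - ε * h))
      = Gfun δ1 δ2 x := by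
    intro x
    rw [← inner_eq' δ1 δ2 x]
    apply integral_congr_ae
    filter_upwards with h
    rw [indA x, show ε * x - ε * h = ε * (x - h) by ring, indB (x - h)]
  have hsub := Measure.integral_comp_mul_left
      (fun y : ℝ => ∫ h : ℝ, (Ici ε).indicator (fun _ => (1:ℝ)) y *
        (δ1 * ((Icc (-11:ℝ) (-9)).indicator (fun _ => (1:ℝ)) h +
               (Icc (9:ℝ) 11).indicator (fun _ => (1:ℝ)) h) +
         δ2 * (Icc (-1:ℝ) 1).indicator (fun _ => (1:ℝ)) h) *
        (Icc (-ε) ε).indicator (fun _ => (1:ℝ)) (y - ε * h)) ε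
  simp only at hsub
  rw [abs_of_pos (inv_pos.2 hε), smul_eq_mul] at hsub
  simp only [key] at hsub
  rw [outer_eq δ1 δ2] at hsub
  field_simp at hsub ⊢
  linarith
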